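/- Let p be an odd prime and k > 2 with 2k + 1 not a power of p. Then there exists i with 0 < i < k such that C(2k, 2i+1) − 2k is not divisible by p. -/

import Mathlib

open Nat

section aux
variable {p : ℕ} [hfact : Fact p.Prime]

lemma my_lucas_step (n j : ℕ) :
    ((n.choose j : ℕ) : ZMod p) =
      (((n % p).choose (j % p) : ℕ) : ZMod p) * (((n / p).choose (j / p) : ℕ) : ZMod p) := by
  have h := Choose.choose_modEq_choose_mod_mul_choose_div_nat (n := n) (k := j) (p := p)
  have h2 := (ZMod.natCast_eq_natCast_iff _ _ _).mpr h
  push_cast at h2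
  exact h2

lemma my_lucas_pow (a n : ℕ) :
    ((n.choose (p ^ a) : ℕ) : ZMod p) = ((n / p ^ a % p : ℕ) : ZMod p) := by
  induction a generalizing n with
  | zero => simp [Nat.choose_one_right, ZMod.natCast_mod]
  | succ a ih =>
    have hp1 : 1 < p := hfact.out.one_lt
    have h1 : p ^ (a + 1) % p = 0 := by
      rw [pow_succ]; exact Nat.mul_mod_left _ _
    have h2 : p ^ (a + 1) / p = p ^ a := by
      rw [pow_succ]; exact Nat.mul_div_cancel _ (by omega)
    rw [my_lucas_step, h1, h2, Nat.choose_zero_right, ih, Nat.div_div_eq_div_mul,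
      ← pow_succ']
    simp

lemma my_cast_inj_of_lt {a b : ℕ} (ha : a < p) (hb : b < p) (h : (a : ZMod p) = b) : a = b := by
  have := congrArg ZMod.val h
  rwa [ZMod.val_natCast_of_lt ha, ZMod.val_natCast_of_lt hb] at this

end aux

lemma my_digits_all_max {p : ℕ} (hp1 : 1 < p) :
    ∀ n, 0 < n → (∀ t, p ^ t ≤ n → n / p ^ t % p = p - 1) → ∃ s, n + 1 = p ^ s := by
  intro n
  induction n using Nat.strong_induction_on with
  | _ n ih =>
    intro hn hd
    have h0 : n % p = p - 1 := by simpa using hd 0 (by simp; omega)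
    rcases lt_or_ge n p with hlt | hle
    · refine ⟨1, ?_⟩
      rw [Nat.mod_eq_of_lt hlt] at h0
      rw [pow_one]
      omega
    · have hm : n / p < n := Nat.div_lt_self hn hp1
      have hm0 : 0 < n / p := Nat.div_pos hle (by omega)
      obtain ⟨s, hs⟩ := ih (n / p) hm hm0 (fun t ht => by
        have hle2 : p ^ (t + 1) ≤ n := by
          calc p ^ (t + 1) = p ^ t * p := by rw [pow_succ]
          _ ≤ (n / p) * p := Nat.mul_le_mul_right p ht
          _ ≤ n := Nat.div_mul_le_self n p
        have := hd (t + 1) hle2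
        rwa [_root_.pow_succ', ← Nat.div_div_eq_div_mul] at this)
      refine ⟨s + 1, ?_⟩
      have h1 : n % p + 1 = p := by omega
      calc n + 1 = p * (n / p) + n % p + 1 := by rw [Nat.div_add_mod n p]
      _ = p * (n / p) + (n % p + 1) := by rw [Nat.add_assoc]
      _ = p * (n / p) + p := by rw [h1]
      _ = p * (n / p + 1) := by ring
      _ = p * p ^ s := by rw [hs]
      _ = p ^ (s + 1) := (_root_.pow_succ' p s).symm

theorem exists_choose_odd_sub_not_dvd (p k : ℕ) (hp : p.Prime) (hodd : Odd p)
    (hk : 2 < k) (h : ¬ ∃ s : ℕ, 2 * k + 1 = p ^ s) :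
    ∃ i : ℕ, 0 < i ∧ i < k ∧
      ¬ ((p : ℤ) ∣ ((2 * k).choose (2 * i + 1) : ℤ) - 2 * k) := by
  haveI : Fact p.Prime := ⟨hp⟩
  by_contra hcon
  push_neg at hcon
  have hp2 : 2 ≤ p := hp.two_le
  have hp3 : 3 ≤ p := by
    rcases hodd with ⟨m, hm⟩; omega
  set n := 2 * k with hn
  have hn6 : 6 ≤ n := by omega
  have H : ∀ j, Odd j → j < n → ((n.choose j : ℕ) : ZMod p) = ((n : ℕ) : ZMod p) := by
    intro j hj hjn
    obtain ⟨m, hm⟩ := hj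
    have hj2 : j = 2 * m + 1 := by omega
    subst hj2
    rcases Nat.eq_zero_or_pos m with rfl | hm0
    · simp [Nat.choose_one_right]
    · have hmk : m < k := by omega
      have hd := hcon m hm0 hmk
      have hz : (((n.choose (2 * m + 1) : ℤ) - (n : ℤ) : ℤ) : ZMod p) = 0 := by
        exact_mod_cast (ZMod.intCast_zmod_eq_zero_iff_dvd _ p).mpr (by exact_mod_cast hd)
      push_cast at hz
      linear_combination hz
  by_cases hdvd : p ∣ n
  · -- Case A : p ∣ n
    set a := n.factorization p with ha
    have hpa : p ^ a ∣ n := Nat.ordProj_dvd n p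
    have hnd : ¬ p ∣ n / p ^ a := Nat.not_dvd_ordCompl hp (by omega)
    have hmod : n / p ^ a % p ≠ 0 := fun hz => hnd (Nat.dvd_of_mod_eq_zero hz)
    have hoddpa : Odd (p ^ a) := hodd.pow
    have hlt : p ^ a < n := by
      have h1 : p ^ a ≤ n := Nat.le_of_dvd (by omega) hpa
      rw [Nat.odd_iff] at hoddpa
      omega
    have hH := H (p ^ a) hoddpa hlt
    rw [my_lucas_pow] at hH
    have hn0 : ((n : ℕ) : ZMod p) = 0 := (ZMod.natCast_eq_zero_iff n p).mpr hdvd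
    rw [hn0] at hH
    have hdd := (ZMod.natCast_eq_zero_iff _ p).mp hH
    have hltp : n / p ^ a % p < p := Nat.mod_lt _ (by omega)
    have := Nat.le_of_dvd (by omega) hdd
    omega
  · -- Case B : p ∤ n
    set c := n % p with hc
    have hc0 : c ≠ 0 := fun hz => hdvd (Nat.dvd_of_mod_eq_zero hz)
    have hclt : c < p := Nat.mod_lt _ (by omega)
    have hcastn : ((n : ℕ) : ZMod p) = ((c : ℕ) : ZMod p) := (ZMod.natCast_mod n p).symm
    rcases lt_or_ge n p with hnp | hpn
    · -- n < p : use j = 3 directly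
      have hH := H 3 ⟨1, by omega⟩ (by omega)
      have hid : n.descFactorial 3 = 6 * n.choose 3 := by
        simpa [Nat.factorial] using Nat.descFactorial_eq_factorial_mul_choose n 3
      have hid2 : n.descFactorial 3 = (n - 2) * ((n - 1) * n) := by
        simp [Nat.descFactorial_succ, Nat.descFactorial_zero]
      have hcast : (((n : ℕ) : ZMod p) - 2) * ((((n : ℕ) : ZMod p) - 1) * ((n : ℕ) : ZMod p))
          = 6 * ((n : ℕ) : ZMod p) := by
        have hq := congrArg (fun x : ℕ => ((x : ℕ) : ZMod p)) (hid2.symm.trans hid)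
        push_cast [Nat.cast_sub (by omega : 1 ≤ n), Nat.cast_sub (by omega : 2 ≤ n)] at hq
        rw [hH] at hq
        linear_combination hq
      have hfac : (((n : ℕ) : ZMod p) + 1) * ((((n : ℕ) : ZMod p) - 4) * ((n : ℕ) : ZMod p)) = 0 := by
        linear_combination hcast
      have hxne : ((n : ℕ) : ZMod p) ≠ 0 := by
        intro hz
        exact hdvd ((ZMod.natCast_eq_zero_iff n p).mp hz)
      rcases mul_eq_zero.mp hfac with h1 | h2
      · have hz1 : (((n + 1 : ℕ)) : ZMod p) = 0 := by push_cast; linear_combination h1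
        have hdp := (ZMod.natCast_eq_zero_iff _ p).mp hz1
        have hnp1 : n + 1 = p := by
          have := Nat.le_of_dvd (by omega) hdp
          omega
        exact h ⟨1, by rw [pow_one]; omega⟩
      · rcases mul_eq_zero.mp h2 with h3 | h4
        · have h4' : ((n : ℕ) : ZMod p) = ((4 : ℕ) : ZMod p) := by push_cast; linear_combination h3
          have := my_cast_inj_of_lt hnp (by omega) h4'
          omega
        · exact hxne h4
    · -- p ≤ n
      have hpn' : p < n := by
        rcases Nat.lt_or_ge p n with h1 | h1
        · exact h1
        · exfalso
          have hpe : p = n := by omega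
          rw [Nat.odd_iff] at hodd
          omega
      have D : ∀ t, p ^ t < n → n / p ^ t % p = c := by
        intro t ht
        have hH := H (p ^ t) hodd.pow ht
        rw [my_lucas_pow, hcastn] at hH
        exact my_cast_inj_of_lt (Nat.mod_lt _ (by omega)) hclt hH
      have hfinal : c = p - 1 → False := by
        intro hcp
        obtain ⟨s, hs⟩ := my_digits_all_max (by omega : 1 < p) n (by omega) (fun t ht => by
          rcases Nat.lt_or_ge (p ^ t) n with h1 | h1
          · rw [D t h1]; exact hcp
          · exfalso
            have hpt : p ^ t = n := by omega
            have hop := hodd.pow (n := t)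
            rw [Nat.odd_iff] at hop
            omega)
        exact h ⟨s, by omega⟩
      have c1 : n / p % p = c := by
        have := D 1 (by rw [pow_one]; exact hpn')
        rwa [pow_one] at this
      rcases Nat.lt_or_ge c 2 with hc1 | hc2
      · -- c = 1
        have hc1' : c = 1 := by omega
        rcases Nat.lt_or_ge 3 p with h3p | h3p
        · -- 3 < p : use j = 3
          have hH := H 3 ⟨1, by omega⟩ (by omega)
          rw [my_lucas_step, hcastn, Nat.mod_eq_of_lt (by omega : 3 < p),
            Nat.div_eq_of_lt (by omega : 3 < p), Nat.choose_zero_right, ← hc, hc1'] at hH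
          -- hH : ↑(Nat.choose 1 3) * ↑1 = ↑(1:ℕ)
          rw [show Nat.choose 1 3 = 0 from rfl] at hH
          have hz1 : ((1 : ℕ) : ZMod p) = 0 := by push_cast at hH ⊢; linear_combination -hH
          have hd1 := (ZMod.natCast_eq_zero_iff 1 p).mp hz1
          exact absurd (Nat.le_of_dvd one_pos hd1) (by omega)
        · -- p = 3 : use j = 5
          have hp3' : p = 3 := by omega
          subst hp3'
          have hH := H 5 ⟨2, by omega⟩ (by omega)
          rw [my_lucas_step] at hH
          rw [show (5:ℕ) % 3 = 2 from rfl, show (5:ℕ) / 3 = 1 from rfl,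
            hcastn, ← hc, hc1'] at hH
          rw [show Nat.choose 1 2 = 0 from rfl] at hH
          have hz1 : ((1 : ℕ) : ZMod 3) = 0 := by push_cast at hH ⊢; linear_combination -hH
          have hd1 := (ZMod.natCast_eq_zero_iff 1 3).mp hz1
          omega
      · -- c ≥ 2
        have hcdvp : c ≤ n / p := le_trans (c1 ▸ Nat.mod_le (n / p) p) (le_refl _)
        have h2p1 : 2 * p + 1 < n := by
          have hdm := Nat.div_add_mod n p
          have h2 : 2 * p ≤ p * (n / p) := by
            calc 2 * p = p * 2 := by ring
            _ ≤ p * (n / p) := Nat.mul_le_mul_left p (by omega)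
          omega
        have hH := H (2 * p + 1) ⟨p, by ring⟩ h2p1
        rw [my_lucas_step] at hH
        have hm1 : (2 * p + 1) % p = 1 := by
          have he : 2 * p + 1 = 1 + 2 * p := by ring
          rw [he, Nat.add_mul_mod_self_right, Nat.mod_eq_of_lt (by omega)]
        have hd1 : (2 * p + 1) / p = 2 := by
          have he : 2 * p + 1 = 1 + 2 * p := by ring
          rw [he, Nat.add_mul_div_right _ _ (by omega : 0 < p), Nat.div_eq_of_lt (by omega)]
        rw [hm1, hd1, Nat.choose_one_right] at hH
        have hstep2 : (((n / p).choose 2 : ℕ) : ZMod p) = ((c.choose 2 : ℕ) : ZMod p) := by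
          rw [my_lucas_step (n := n / p) (j := 2), Nat.mod_eq_of_lt (by omega : 2 < p),
            Nat.div_eq_of_lt (by omega : 2 < p), Nat.choose_zero_right, c1]
          simp
        rw [hstep2, hcastn, ← hc] at hH
        have hcne : ((c : ℕ) : ZMod p) ≠ 0 := by
          intro hz
          have := (ZMod.natCast_eq_zero_iff c p).mp hz
          have := Nat.le_of_dvd (by omega) this
          omega
        have hch : ((c.choose 2 : ℕ) : ZMod p) = 1 := by
          have h2 : ((c : ℕ) : ZMod p) * ((c.choose 2 : ℕ) : ZMod p)
              = ((c : ℕ) : ZMod p) * 1 := by rw [mul_one]; exact hH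
          exact mul_left_cancel₀ hcne h2
        have hid : c.descFactorial 2 = 2 * c.choose 2 := by
          simpa [Nat.factorial] using Nat.descFactorial_eq_factorial_mul_choose c 2
        have hid2 : c.descFactorial 2 = (c - 1) * c := by
          simp [Nat.descFactorial_succ, Nat.descFactorial_zero]
        have hz : (((c : ℕ) : ZMod p) - 2) * (((c : ℕ) : ZMod p) + 1) = 0 := by
          have hq := congrArg (fun x : ℕ => ((x : ℕ) : ZMod p)) (hid2.symm.trans hid)
          push_cast [Nat.cast_sub (by omega : 1 ≤ c)] at hq
          rw [hch] at hq
          linear_combination hq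
        rcases mul_eq_zero.mp hz with hz2 | hzm1
        · have hc2 : c = 2 := by
            have hq : ((c : ℕ) : ZMod p) = ((2 : ℕ) : ZMod p) := by
              push_cast; linear_combination hz2
            exact my_cast_inj_of_lt hclt (by omega) hq
          rcases Nat.lt_or_ge 3 p with h3p | h3p
          · have hH3 := H 3 ⟨1, by omega⟩ (by omega)
            rw [my_lucas_step, hcastn, Nat.mod_eq_of_lt (by omega : 3 < p),
              Nat.div_eq_of_lt (by omega : 3 < p), Nat.choose_zero_right, ← hc, hc2] at hH3
            rw [show Nat.choose 2 3 = 0 from rfl] at hH3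
            have hz1 : ((2 : ℕ) : ZMod p) = 0 := by push_cast at hH3 ⊢; linear_combination -hH3
            have hd2 := (ZMod.natCast_eq_zero_iff 2 p).mp hz1
            have := Nat.le_of_dvd (by omega) hd2
            omega
          · exact hfinal (by omega)
        · have hz1 : (((c + 1 : ℕ)) : ZMod p) = 0 := by push_cast; linear_combination hzm1
          have hdp := (ZMod.natCast_eq_zero_iff _ p).mp hz1
          have hcp1 : c + 1 = p := by
            have := Nat.le_of_dvd (by omega) hdp
            omega
          exact hfinal (by omega)
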